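/- Let d_1,...,d_r be positive integers admitting integers q_1,...,q_r with gcd(q_i,d_i)=1 and Σ_{i=1}^r q_i/d_i ∈ ℤ. Then for each index j, d_j divides lcm of the remaining d_i (i ≠ j). In particular, setting κ = lcm(d_1,...,d_r), κ² divides d_1⋯d_r. -/

import Mathlib

open Finset

lemma lcm_fact_aux {ι : Type*} [DecidableEq ι] (f : ι → ℕ) (hf : ∀ i, f i ≠ 0)
    (s : Finset ι) (hs : s.Nonempty) (p : ℕ) :
    ∃ j ∈ s, (s.lcm f).factorization p ≤ (f j).factorization p := by
  induction hs using Finset.Nonempty.cons_induction with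
  | singleton a => exact ⟨a, mem_singleton_self a, by simp [Finset.lcm_singleton]⟩
  | cons a s ha hs ih =>
    obtain ⟨j, hj, hle⟩ := ih
    have hsl : s.lcm f ≠ 0 := by
      intro h
      rw [Finset.lcm_eq_zero_iff] at h
      obtain ⟨i, hi, h0⟩ := h
      exact hf i h0
    rw [Finset.cons_eq_insert, Finset.lcm_insert, lcm_eq_nat_lcm,
      Nat.factorization_lcm (hf a) hsl]
    simp only [Finsupp.sup_apply, max_le_iff, le_max_iff]
    rcases le_total ((f a).factorization p) ((s.lcm f).factorization p) with h | h
    · exact ⟨j, mem_insert_of_mem hj, le_trans h hle, hle⟩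
    · exact ⟨a, mem_insert_self a s, le_refl _, h⟩

/-- Let `d 1, ..., d r` (`r ≥ 2`) be positive integers admitting integers `q i` with
`gcd (q i) (d i) = 1` and `∑ i, q i / d i ∈ ℤ`.  Then each `d j` divides the lcm of
the remaining `d i`, and, with `κ = lcm (d 1, ..., d r)`, `κ²` divides `d 1 ⋯ d r`. -/
theorem dvd_lcm_erase_and_lcm_sq_dvd_prod (r : ℕ) (hr : 2 ≤ r)
    (d : Fin r → ℕ) (hd : ∀ i, 0 < d i)
    (q : Fin r → ℤ) (hcop : ∀ i, Int.gcd (q i) (d i) = 1)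
    (hsum : ∃ z : ℤ, ∑ i, (q i : ℚ) / (d i : ℚ) = (z : ℚ)) :
    (∀ j, d j ∣ (Finset.univ.erase j).lcm d)
      ∧ (Finset.univ.lcm d) ^ 2 ∣ ∏ i, d i := by
  obtain ⟨z, hz⟩ := hsum
  have hd0 : ∀ i, (d i : ℚ) ≠ 0 := fun i => Nat.cast_ne_zero.mpr (hd i).ne'
  have key : ∀ j, d j ∣ (Finset.univ.erase j).lcm d := by
    intro j
    set L := (Finset.univ.erase j).lcm d with hLdef
    have hLdvd : ∀ i ∈ Finset.univ.erase j, d i ∣ L := fun i hi => Finset.dvd_lcm hi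
    have hL0 : L ≠ 0 := by
      intro h; rw [hLdef, Finset.lcm_eq_zero_iff] at h
      obtain ⟨i, _, h0⟩ := h; exact (hd i).ne' h0
    have hsplit : (q j : ℚ) / (d j) + ∑ i ∈ Finset.univ.erase j, (q i : ℚ) / (d i) = z :=
      (Finset.add_sum_erase Finset.univ (fun i => (q i : ℚ) / (d i)) (Finset.mem_univ j)).trans hz
    set m : ℤ := z * L - ∑ i ∈ Finset.univ.erase j, q i * ((L / d i : ℕ) : ℤ) with hm
    have hcast : ∀ i ∈ Finset.univ.erase j, ((L / d i : ℕ) : ℚ) = (L : ℚ) / (d i : ℚ) :=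
      fun i hi => Nat.cast_div (hLdvd i hi) (hd0 i)
    have hqL : (q j : ℚ) * L / d j = (m : ℚ) := by
      have h1 : (q j : ℚ) / (d j) = (z : ℚ) - ∑ i ∈ Finset.univ.erase j, (q i : ℚ) / (d i) :=
        eq_sub_of_add_eq hsplit
      have h2 : (q j : ℚ) * L / d j = ((q j : ℚ) / d j) * L := by ring
      have hmq : (m : ℚ)
          = (z : ℚ) * L - ∑ i ∈ Finset.univ.erase j, (q i : ℚ) * ((L : ℚ) / (d i : ℚ)) := by
        have hsc : ((∑ i ∈ Finset.univ.erase j, q i * ((L / d i : ℕ) : ℤ) : ℤ) : ℚ)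
            = ∑ i ∈ Finset.univ.erase j, (q i : ℚ) * ((L : ℚ) / (d i : ℚ)) := by
          rw [Int.cast_sum]
          refine Finset.sum_congr rfl fun i hi => ?_
          rw [Int.cast_mul, Int.cast_natCast, hcast i hi]
        rw [hm, Int.cast_sub, Int.cast_mul, hsc]
        norm_cast
      rw [h2, h1, hmq, sub_mul, Finset.sum_mul]
      congr 1
      refine Finset.sum_congr rfl fun i hi => ?_
      ring
    have hint : (q j) * (L : ℤ) = m * (d j : ℤ) := by
      have h3 : (q j : ℚ) * L = (m : ℚ) * d j := (div_eq_iff (hd0 j)).mp hqL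
      exact_mod_cast h3
    have hdvd : (d j : ℤ) ∣ q j * L := ⟨m, by linarith [hint]⟩
    have hco : IsCoprime ((d j : ℤ)) (q j) :=
      (Int.isCoprime_iff_gcd_eq_one.mpr (hcop j)).symm
    have := hco.dvd_of_dvd_mul_left hdvd
    exact_mod_cast this
  refine ⟨key, ?_⟩
  set κ := (Finset.univ : Finset (Fin r)).lcm d with hκdef
  have hκ0 : κ ≠ 0 := by
    intro h; rw [hκdef, Finset.lcm_eq_zero_iff] at h
    obtain ⟨i, _, h0⟩ := h; exact (hd i).ne' h0
  have hprod0 : (∏ i, d i) ≠ 0 := Finset.prod_ne_zero_iff.mpr fun i _ => (hd i).ne'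
  rw [← Nat.factorization_le_iff_dvd (pow_ne_zero 2 hκ0) hprod0]
  rw [Finsupp.le_def]
  intro p
  have hne : (Finset.univ : Finset (Fin r)).Nonempty := ⟨⟨0, by omega⟩, Finset.mem_univ _⟩
  obtain ⟨j, _, hj⟩ := lcm_fact_aux d (fun i => (hd i).ne') Finset.univ hne p
  rw [← hκdef] at hj
  -- κ divides the product over erase j
  have hκdvd : κ ∣ ∏ i ∈ Finset.univ.erase j, d i := by
    apply Finset.lcm_dvd
    intro i hi
    by_cases h : i = j
    · subst h
      exact (key i).trans (Finset.lcm_dvd fun k hk => Finset.dvd_prod_of_mem d hk)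
    · exact Finset.dvd_prod_of_mem d (Finset.mem_erase.mpr ⟨h, Finset.mem_univ i⟩)
  have hprodj0 : (∏ i ∈ Finset.univ.erase j, d i) ≠ 0 :=
    Finset.prod_ne_zero_iff.mpr fun i _ => (hd i).ne'
  have h3 : κ.factorization p ≤ (∏ i ∈ Finset.univ.erase j, d i).factorization p :=
    (Finsupp.le_def.mp ((Nat.factorization_le_iff_dvd hκ0 hprodj0).mpr hκdvd)) p
  have hfp : (∏ i, d i).factorization p = ∑ i, (d i).factorization p := by
    rw [Nat.factorization_prod fun i _ => (hd i).ne']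
    simp [Finset.sum_apply']
  have hfpe : (∏ i ∈ Finset.univ.erase j, d i).factorization p
      = ∑ i ∈ Finset.univ.erase j, (d i).factorization p := by
    rw [Nat.factorization_prod fun i _ => (hd i).ne']
    simp [Finset.sum_apply']
  have hsq : (κ ^ 2).factorization p = 2 * κ.factorization p := by
    rw [Nat.factorization_pow]; simp [two_mul]
  rw [hsq, hfp, ← Finset.add_sum_erase _ _ (Finset.mem_univ j)]
  omega
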